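/- Let Λ = diag(λ₁, …, λ_m) be a diagonal m×m matrix with pairwise distinct entries, let B be any m×m matrix, and let Δ be real. Then Σ_{n=1}^∞ (Δⁿ/n!) Σ_{j=0}^{n−1} Λ^j B Λ^{n−1−j} = B ∘ X(Λ,Δ), where ∘ denotes the Hadamard (entrywise) product and X(Λ,Δ) is the m×m matrix with X_{ii} = Δ·e^{Δλ_i} and X_{ij} = (e^{Δλ_i} − e^{Δλ_j})/(λ_i − λ_j) for i ≠ j. -/

import Mathlib

lemma exp_hasSum (x : ℝ) : HasSum (fun n : ℕ => x ^ n / n.factorial) (Real.exp x) := by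
  rw [Real.exp_eq_exp_ℝ]
  exact NormedSpace.expSeries_div_hasSum_exp x

lemma exp_hasSum_shift (x : ℝ) :
    HasSum (fun n : ℕ => x ^ (n + 1) / (n + 1).factorial) (Real.exp x - 1) := by
  have h := (hasSum_nat_add_iff' (f := fun n : ℕ => x ^ n / (n.factorial : ℝ)) 1).2
    (exp_hasSum x)
  simpa using h

theorem diagonal_directional_derivative_hadamard (m : ℕ) (lam : Fin m → ℝ)
    (hdist : Function.Injective lam) (B : Matrix (Fin m) (Fin m) ℝ) (Δ : ℝ) :
    HasSum (fun n : ℕ => if n = 0 then (0 : Matrix (Fin m) (Fin m) ℝ) else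
        (Δ ^ n / (n.factorial : ℝ)) • ∑ j ∈ Finset.range n,
          (Matrix.diagonal lam) ^ j * B * (Matrix.diagonal lam) ^ (n - 1 - j))
      (Matrix.hadamard B (Matrix.of fun i j =>
        if i = j then Δ * Real.exp (Δ * lam i)
        else (Real.exp (Δ * lam i) - Real.exp (Δ * lam j)) / (lam i - lam j))) := by
  refine Pi.hasSum.2 ?_
  intro i
  rw [Pi.hasSum]
  intro k
  have hfun : (fun n : ℕ => (if n = 0 then (0 : Matrix (Fin m) (Fin m) ℝ) else
      (Δ ^ n / (n.factorial : ℝ)) • ∑ j ∈ Finset.range n,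
        (Matrix.diagonal lam) ^ j * B * (Matrix.diagonal lam) ^ (n - 1 - j)) i k)
      = fun n : ℕ => if n = 0 then (0 : ℝ) else
        (Δ ^ n / (n.factorial : ℝ)) * ∑ j ∈ Finset.range n,
          lam i ^ j * B i k * lam k ^ (n - 1 - j) := by
    funext n
    split
    · simp
    · rw [Matrix.smul_apply, Matrix.sum_apply, smul_eq_mul]
      congr 1
      refine Finset.sum_congr rfl fun j _ => ?_
      simp [Matrix.diagonal_pow, Matrix.mul_diagonal, Matrix.diagonal_mul, Pi.pow_apply,
        mul_comm, mul_assoc, mul_left_comm]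
  rw [hfun]
  simp only [Matrix.hadamard_apply, Matrix.of_apply]
  set f : ℕ → ℝ := fun n : ℕ => if n = 0 then (0 : ℝ) else
    (Δ ^ n / (n.factorial : ℝ)) * ∑ j ∈ Finset.range n,
      lam i ^ j * B i k * lam k ^ (n - 1 - j) with hf
  have hf0 : f 0 = 0 := rfl
  by_cases hik : i = k
  · subst hik
    simp only [if_pos rfl]
    have hshift : HasSum (fun n : ℕ => f (n + 1)) (B i i * (Δ * Real.exp (Δ * lam i))) := by
      have h1 := (exp_hasSum (Δ * lam i)).mul_left (B i i * Δ)
      convert h1 using 1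
      · rfl
      · funext n
        simp only [hf, if_neg (Nat.succ_ne_zero n)]
        have step : ∀ j ∈ Finset.range (n + 1),
            lam i ^ j * B i i * lam i ^ (n + 1 - 1 - j) = B i i * lam i ^ n := by
          intro j hj
          rw [Finset.mem_range] at hj
          have hjn : j + (n + 1 - 1 - j) = n := by omega
          rw [mul_right_comm, ← pow_add, hjn, mul_comm]
        rw [Finset.sum_congr rfl step, Finset.sum_const, Finset.card_range, nsmul_eq_mul]
        have h2 : (n.factorial : ℝ) ≠ 0 := Nat.cast_ne_zero.2 n.factorial_ne_zero
        rw [Nat.factorial_succ, mul_pow]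
        push_cast
        field_simp
        ring
      · ring
    exact (hasSum_nat_add_iff' (f := f) 1).1 (by simpa [hf0] using hshift)
  · simp only [if_neg hik]
    have hne : lam i - lam k ≠ 0 := sub_ne_zero.2 fun h => hik (hdist h)
    have hshift : HasSum (fun n : ℕ => f (n + 1))
        (B i k * ((Real.exp (Δ * lam i) - Real.exp (Δ * lam k)) / (lam i - lam k))) := by
      have h1 := ((exp_hasSum_shift (Δ * lam i)).sub (exp_hasSum_shift (Δ * lam k))).mul_left
        (B i k / (lam i - lam k))
      convert h1 using 1
      · rfl
      · funext n
        simp only [hf, if_neg (Nat.succ_ne_zero n)]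
        have hgeom : (∑ j ∈ Finset.range (n + 1), lam i ^ j * lam k ^ (n + 1 - 1 - j))
            * (lam i - lam k) = lam i ^ (n + 1) - lam k ^ (n + 1) := geom_sum₂_mul _ _ _
        have hsval : ∑ j ∈ Finset.range (n + 1), lam i ^ j * lam k ^ (n + 1 - 1 - j)
            = (lam i ^ (n + 1) - lam k ^ (n + 1)) / (lam i - lam k) := by
          rw [eq_div_iff hne]; exact hgeom
        have hsum : ∑ j ∈ Finset.range (n + 1), lam i ^ j * B i k * lam k ^ (n + 1 - 1 - j)
            = B i k * ∑ j ∈ Finset.range (n + 1), lam i ^ j * lam k ^ (n + 1 - 1 - j) := by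
          rw [Finset.mul_sum]; exact Finset.sum_congr rfl fun j _ => by ring
        have h2 : ((n + 1).factorial : ℝ) ≠ 0 := Nat.cast_ne_zero.2 (n + 1).factorial_ne_zero
        rw [hsum, hsval, mul_pow, mul_pow]
        field_simp
      · field_simp
        ring
    exact (hasSum_nat_add_iff' (f := f) 1).1 (by simpa [hf0] using hshift)
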